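/- Let μ be the probability measure on 2^ω determined by: μ([σ0]) = μ([σ1]) = μ([σ])/2 for all strings σ of even length, and μ([σ0]) = μ([σ]), μ([σ1]) = 0 for all σ of odd length. Then for 0 ≤ γ < 1/2 the γ-energy I_γ(μ) is finite, and for γ = 1/2 it is infinite. -/

import Mathlib

open MeasureTheory
open scoped Classical

/-- The cylinder of infinite binary sequences extending the finite string `σ`. -/
def cyl (σ : List Bool) : Set (ℕ → Bool) :=
  {a | ∀ i, i < σ.length → a i = σ.getD i false}

/-- The standard ultrametric `υ(a,b) = 2^{-min{n : a(n) ≠ b(n)}}` on Cantor space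
(with `υ(a,a) = 0`), valued in `ℝ≥0∞`. -/
noncomputable def ups (a b : ℕ → Bool) : ENNReal :=
  if a = b then 0 else 2 ^ (-((sInf {n : ℕ | a n ≠ b n} : ℕ) : ℤ))

def pre (a : ℕ → Bool) (n : ℕ) : List Bool := List.ofFn (fun i : Fin n => a i)

lemma pre_length (a : ℕ → Bool) (n : ℕ) : (pre a n).length = n := by simp [pre]

lemma pre_congr {a a' : ℕ → Bool} {n : ℕ} (h : ∀ i < n, a i = a' i) :
    pre a n = pre a' n := by
  simp only [pre]
  congr 1; funext i; exact h i i.isLt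

lemma pre_succ (a : ℕ → Bool) (n : ℕ) : pre a (n+1) = pre a n ++ [a n] := by
  simp only [pre, List.ofFn_succ']
  simp [List.concat_eq_append]

lemma cyl_nil : cyl [] = Set.univ := by ext a; simp [cyl]

lemma pre_zero (a : ℕ → Bool) : pre a 0 = [] := by simp [pre]

lemma mem_cyl_pre {a b : ℕ → Bool} {n : ℕ} : b ∈ cyl (pre a n) ↔ ∀ i < n, b i = a i := by
  constructor
  · intro h i hi
    have := h i (by simpa [pre_length] using hi)
    simpa [pre, List.getD_eq_getElem, hi] using this
  · intro h i hi
    rw [pre_length] at hi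
    simpa [pre, List.getD_eq_getElem, hi] using h i hi

lemma pre_append (a : ℕ → Bool) (n : ℕ) (c : Bool) :
    pre a n ++ [c] = pre (Function.update a n c) (n+1) := by
  rw [pre_succ, Function.update_self,
    pre_congr (a' := Function.update a n c) (n := n) fun i hi => by
      rw [Function.update_of_ne (by omega)]]

lemma mem_cyl_pre_append {a b : ℕ → Bool} {n : ℕ} {c : Bool} :
    b ∈ cyl (pre a n ++ [c]) ↔ (∀ i < n, b i = a i) ∧ b n = c := by
  rw [pre_append, mem_cyl_pre]
  constructor
  · intro h
    exact ⟨fun i hi => by simpa [Function.update_of_ne (by omega : i ≠ n)] using h i (by omega),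
      by simpa using h n (by omega)⟩
  · rintro ⟨h1, h2⟩ i hi
    rcases Nat.lt_succ_iff_lt_or_eq.mp hi with hi | rfl
    · simpa [Function.update_of_ne (by omega : i ≠ n)] using h1 i hi
    · simpa using h2

lemma measurableSet_cyl (σ : List Bool) : MeasurableSet (cyl σ) := by
  have : cyl σ = ⋂ i, ⋂ (_ : i < σ.length), {a : ℕ → Bool | a i = σ.getD i false} := by
    ext a; simp [cyl]
  rw [this]
  exact MeasurableSet.iInter fun i => MeasurableSet.iInter fun _ =>
    (measurable_pi_apply i) (measurableSet_singleton _)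

lemma measurableSet_singleton' (a : ℕ → Bool) : MeasurableSet ({a} : Set (ℕ → Bool)) := by
  have : ({a} : Set (ℕ → Bool)) = ⋂ i, {b : ℕ → Bool | b i = a i} := by
    ext b
    simp only [Set.mem_singleton_iff, Set.mem_iInter, Set.mem_setOf_eq]
    exact ⟨fun h i => by rw [h], fun h => funext h⟩
  rw [this]
  exact MeasurableSet.iInter fun i =>
    (measurable_pi_apply i) (measurableSet_singleton _)

lemma cyl_le_bound (μ : Measure (ℕ → Bool)) [IsProbabilityMeasure μ]
    (heven : ∀ σ : List Bool, Even σ.length →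
      μ (cyl (σ ++ [false])) = μ (cyl σ) / 2 ∧ μ (cyl (σ ++ [true])) = μ (cyl σ) / 2)
    (hodd : ∀ σ : List Bool, Odd σ.length →
      μ (cyl (σ ++ [false])) = μ (cyl σ) ∧ μ (cyl (σ ++ [true])) = 0) :
    ∀ σ : List Bool, μ (cyl σ) ≤ (2 : ENNReal)⁻¹ ^ ((σ.length + 1) / 2) := by
  intro σ
  induction σ using List.reverseRecOn with
  | nil => simp [cyl_nil]
  | append_singleton τ c ih =>
    rcases Nat.even_or_odd τ.length with he | ho
    · have h2 : μ (cyl (τ ++ [c])) = μ (cyl τ) / 2 := by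
        cases c
        · exact (heven τ he).1
        · exact (heven τ he).2
      rw [h2]
      have hexp : (τ.length + 1 + 1) / 2 = (τ.length + 1) / 2 + 1 := by
        obtain ⟨k, hk⟩ := he; omega
      rw [List.length_append, List.length_singleton, hexp, pow_succ,
        ENNReal.div_eq_inv_mul, mul_comm]
      exact mul_le_mul_left ih _
    · have h2 : μ (cyl (τ ++ [c])) ≤ μ (cyl τ) := by
        cases c
        · exact le_of_eq (hodd τ ho).1
        · exact (hodd τ ho).2 ▸ zero_le
      have hexp : (τ.length + 1 + 1) / 2 = (τ.length + 1) / 2 := by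
        obtain ⟨k, hk⟩ := ho; omega
      rw [List.length_append, List.length_singleton, hexp]
      exact h2.trans ih

lemma ups_eq {a b : ℕ → Bool} {n : ℕ} (h1 : ∀ i < n, b i = a i) (h2 : b n ≠ a n) :
    ups a b = 2 ^ (-(n : ℤ)) := by
  have hab : a ≠ b := fun h => h2 (by rw [h])
  have hsInf : sInf {i : ℕ | a i ≠ b i} = n := by
    have hmem : n ∈ {i : ℕ | a i ≠ b i} := fun h => h2 h.symm
    refine le_antisymm (Nat.sInf_le hmem) ?_
    by_contra hlt
    push_neg at hlt
    have := Nat.sInf_mem ⟨n, hmem⟩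
    exact this (h1 _ hlt).symm
  simp [ups, hab, hsInf]

lemma ups_rpow {n : ℕ} {γ : ℝ} :
    ((2 : ENNReal) ^ (-(n : ℤ))) ^ (-γ) = 2 ^ ((n : ℝ) * γ) := by
  rw [← ENNReal.rpow_intCast 2 (-(n : ℤ)), ← ENNReal.rpow_mul]
  push_cast
  ring_nf

lemma sum_bound {γ : ℝ} (hγ : γ < 1/2) :
    ∑' n : ℕ, (2 : ENNReal) ^ ((n : ℝ) * γ) * (2 : ENNReal)⁻¹ ^ ((n + 2) / 2) < ⊤ := by
  have hterm : ∀ n : ℕ, (2 : ENNReal) ^ ((n : ℝ) * γ) * (2 : ENNReal)⁻¹ ^ ((n + 2) / 2)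
      ≤ ((2 : ENNReal) ^ (γ - 1/2)) ^ n := by
    intro n
    have h1 : (2 : ENNReal)⁻¹ ^ ((n + 2) / 2) = (2 : ENNReal) ^ (-(((n + 2) / 2 : ℕ) : ℝ)) := by
      rw [← ENNReal.rpow_natCast, ← ENNReal.rpow_neg_one, ← ENNReal.rpow_mul]
      norm_num
    rw [h1, ← ENNReal.rpow_add _ _ (by norm_num) (by norm_num),
      ← ENNReal.rpow_natCast ((2:ENNReal) ^ (γ - 1/2)), ← ENNReal.rpow_mul]
    apply ENNReal.rpow_le_rpow_of_exponent_le (by norm_num)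
    have h2 : ((n : ℝ)) / 2 ≤ (((n + 2) / 2 : ℕ) : ℝ) := by
      have hn : n ≤ 2 * ((n + 2) / 2) := by omega
      have := Nat.cast_le (α := ℝ) |>.mpr hn
      push_cast at this
      linarith
    nlinarith
  calc ∑' n : ℕ, (2 : ENNReal) ^ ((n : ℝ) * γ) * (2 : ENNReal)⁻¹ ^ ((n + 2) / 2)
      ≤ ∑' n : ℕ, ((2 : ENNReal) ^ (γ - 1/2)) ^ n := ENNReal.tsum_le_tsum hterm
    _ = (1 - (2 : ENNReal) ^ (γ - 1/2))⁻¹ := ENNReal.tsum_geometric _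
    _ < ⊤ := by
        rw [ENNReal.inv_lt_top]
        have : (2 : ENNReal) ^ (γ - 1/2) < 1 :=
          ENNReal.rpow_lt_one_of_one_lt_of_neg (by norm_num) (by linarith)
        exact tsub_pos_of_lt this

/-- For the measure on `2^ω` that splits mass evenly at even levels and sends all mass to
the `0`-child at odd levels, the `γ`-energy is finite for `0 ≤ γ < 1/2` and infinite at
`γ = 1/2`. -/
theorem stmt7 (μ : Measure (ℕ → Bool)) [IsProbabilityMeasure μ]
    (heven : ∀ σ : List Bool, Even σ.length →
      μ (cyl (σ ++ [false])) = μ (cyl σ) / 2 ∧ μ (cyl (σ ++ [true])) = μ (cyl σ) / 2)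
    (hodd : ∀ σ : List Bool, Odd σ.length →
      μ (cyl (σ ++ [false])) = μ (cyl σ) ∧ μ (cyl (σ ++ [true])) = 0) :
    (∀ γ : ℝ, 0 ≤ γ → γ < 1/2 → ∫⁻ a, ∫⁻ b, ups a b ^ (-γ) ∂μ ∂μ < ⊤) ∧
      ∫⁻ a, ∫⁻ b, ups a b ^ (-(1/2 : ℝ)) ∂μ ∂μ = ⊤ := by
  have hbound := cyl_le_bound μ heven hodd
  -- E a n : the set of b differing from a first at position n
  set E : (ℕ → Bool) → ℕ → Set (ℕ → Bool) := fun a n => cyl (pre a n ++ [!(a n)]) with hE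
  have hmemE : ∀ {a b : ℕ → Bool} {n : ℕ},
      b ∈ E a n ↔ (∀ i < n, b i = a i) ∧ b n ≠ a n := by
    intro a b n
    rw [hE]
    simp only [mem_cyl_pre_append]
    constructor
    · rintro ⟨h1, h2⟩; exact ⟨h1, by rw [h2]; cases a n <;> simp⟩
    · rintro ⟨h1, h2⟩; exact ⟨h1, by cases hbn : b n <;> cases han : a n <;>
        simp_all⟩
  have hmeasE : ∀ a n, MeasurableSet (E a n) := fun a n => measurableSet_cyl _
  have hEbound : ∀ a n, μ (E a n) ≤ (2 : ENNReal)⁻¹ ^ ((n + 2) / 2) := by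
    intro a n
    have := hbound (pre a n ++ [!(a n)])
    rwa [List.length_append, List.length_singleton, pre_length] at this
  -- singletons have measure zero
  have hsing : ∀ a : ℕ → Bool, μ {a} = 0 := by
    intro a
    have hle : ∀ k : ℕ, μ {a} ≤ (2 : ENNReal)⁻¹ ^ k := by
      intro k
      have hsub : ({a} : Set (ℕ → Bool)) ⊆ cyl (pre a (2*k)) := by
        intro b hb
        rw [Set.mem_singleton_iff] at hb
        subst hb
        exact mem_cyl_pre.mpr fun i _ => rfl
      calc μ {a} ≤ μ (cyl (pre a (2*k))) := measure_mono hsub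
        _ ≤ (2 : ENNReal)⁻¹ ^ ((2*k + 1)/2) := by
            have := hbound (pre a (2*k)); rwa [pre_length] at this
        _ = (2 : ENNReal)⁻¹ ^ k := by congr 1; omega
    have htend : Filter.Tendsto (fun k : ℕ => (2 : ENNReal)⁻¹ ^ k)
        Filter.atTop (nhds 0) :=
      ENNReal.tendsto_pow_atTop_nhds_zero_of_lt_one (by norm_num)
    have := ge_of_tendsto' htend hle
    exact le_antisymm this (zero_le)
  -- pointwise decomposition upper bound
  have hpt : ∀ (γ : ℝ) (a b : ℕ → Bool),
      ups a b ^ (-γ) ≤ Set.indicator {a} (fun _ => (⊤ : ENNReal)) b +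
        ∑' n : ℕ, (2 : ENNReal) ^ ((n : ℝ) * γ) * Set.indicator (E a n) 1 b := by
    intro γ a b
    by_cases hab : b = a
    · subst hab
      rw [Set.indicator_of_mem (Set.mem_singleton b)]
      simp
    · have hne : a ≠ b := fun h => hab h.symm
      have hnonempty : {i : ℕ | a i ≠ b i}.Nonempty := by
        rcases Function.ne_iff.mp hne with ⟨i, hi⟩
        exact ⟨i, hi⟩
      set n := sInf {i : ℕ | a i ≠ b i} with hn
      have hmem := Nat.sInf_mem hnonempty
      have h2 : b n ≠ a n := fun h => hmem h.symm
      have h1 : ∀ i < n, b i = a i := by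
        intro i hi
        by_contra hbi
        have hmem' : i ∈ {j : ℕ | a j ≠ b j} := fun h => hbi h.symm
        have := Nat.sInf_le hmem'
        omega
      have hups : ups a b ^ (-γ) = (2 : ENNReal) ^ ((n : ℝ) * γ) := by
        rw [ups_eq h1 h2, ups_rpow]
      have hbE : b ∈ E a n := hmemE.mpr ⟨h1, h2⟩
      calc ups a b ^ (-γ) = (2 : ENNReal) ^ ((n : ℝ) * γ) * Set.indicator (E a n) 1 b := by
            rw [Set.indicator_of_mem hbE]; simp [hups]
        _ ≤ ∑' m : ℕ, (2 : ENNReal) ^ ((m : ℝ) * γ) * Set.indicator (E a m) 1 b :=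
            ENNReal.le_tsum n
        _ ≤ _ := le_add_self
  -- inner integral upper bound
  have hinner : ∀ (γ : ℝ) (a : ℕ → Bool),
      ∫⁻ b, ups a b ^ (-γ) ∂μ ≤
        ∑' n : ℕ, (2 : ENNReal) ^ ((n : ℝ) * γ) * (2 : ENNReal)⁻¹ ^ ((n + 2) / 2) := by
    intro γ a
    have step1 : ∫⁻ b, ups a b ^ (-γ) ∂μ ≤
        ∫⁻ b, (Set.indicator {a} (fun _ => (⊤ : ENNReal)) b +
          ∑' n : ℕ, (2 : ENNReal) ^ ((n : ℝ) * γ) * Set.indicator (E a n) 1 b) ∂μ :=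
      lintegral_mono (hpt γ a)
    have hmeas1 : Measurable (Set.indicator {a} (fun _ => (⊤ : ENNReal))) :=
      measurable_const.indicator (measurableSet_singleton' a)
    rw [lintegral_add_left hmeas1] at step1
    rw [lintegral_indicator_const (measurableSet_singleton' a), hsing a, mul_zero,
      zero_add] at step1
    have hmeasn : ∀ n : ℕ, Measurable (fun b =>
        (2 : ENNReal) ^ ((n : ℝ) * γ) * Set.indicator (E a n) 1 b) := fun n =>
      (measurable_one.indicator (hmeasE a n)).const_mul _
    rw [lintegral_tsum (fun n => (hmeasn n).aemeasurable)] at step1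
    refine step1.trans (ENNReal.tsum_le_tsum fun n => ?_)
    rw [lintegral_const_mul _ (measurable_one.indicator (hmeasE a n)),
      lintegral_indicator_one (hmeasE a n)]
    exact mul_le_mul_right (hEbound a n) _
  constructor
  · -- finiteness for γ < 1/2
    intro γ hγ0 hγ
    calc ∫⁻ a, ∫⁻ b, ups a b ^ (-γ) ∂μ ∂μ
        ≤ ∫⁻ _, (∑' n : ℕ, (2 : ENNReal) ^ ((n : ℝ) * γ) *
            (2 : ENNReal)⁻¹ ^ ((n + 2) / 2)) ∂μ := lintegral_mono fun a => hinner γ a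
      _ = ∑' n : ℕ, (2 : ENNReal) ^ ((n : ℝ) * γ) * (2 : ENNReal)⁻¹ ^ ((n + 2) / 2) := by
          rw [lintegral_const, measure_univ, mul_one]
      _ < ⊤ := sum_bound hγ
  · -- infiniteness at γ = 1/2
    set A : Set (ℕ → Bool) := {a | ∀ i, Odd i → a i = false} with hA
    have hmeasA : MeasurableSet A := by
      have : A = ⋂ i, ⋂ (_ : Odd i), {a : ℕ → Bool | a i = false} := by
        ext a; simp [hA]
      rw [this]
      exact MeasurableSet.iInter fun i => MeasurableSet.iInter fun _ =>
        (measurable_pi_apply i) (measurableSet_singleton _)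
    have hmuA : μ A = 1 := by
      have hcompl : μ Aᶜ = 0 := by
        have hsub : Aᶜ ⊆ ⋃ i, ⋃ (_ : Odd i), {a : ℕ → Bool | a i = true} := by
          intro a ha
          simp only [hA, Set.mem_compl_iff, Set.mem_setOf_eq, not_forall] at ha
          obtain ⟨i, hodd', hai⟩ := ha
          simp only [Set.mem_iUnion, Set.mem_setOf_eq]
          exact ⟨i, hodd', by cases h : a i; exact absurd h hai; rfl⟩
        refine measure_mono_null hsub ?_
        refine measure_iUnion_null fun i => measure_iUnion_null fun hoddi => ?_
        have hsub2 : {a : ℕ → Bool | a i = true} ⊆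
            ⋃ σ : List Bool, ⋃ (_ : σ.length = i), cyl (σ ++ [true]) := by
          intro a ha
          simp only [Set.mem_iUnion]
          exact ⟨pre a i, pre_length a i,
            mem_cyl_pre_append.mpr ⟨fun j _ => rfl, ha⟩⟩
        refine measure_mono_null hsub2 ?_
        refine measure_iUnion_null fun σ => measure_iUnion_null fun hσ => ?_
        exact (hodd σ (hσ ▸ hoddi)).2
      have := measure_compl hmeasA (measure_ne_top μ A)
      rw [hcompl, measure_univ] at this
      have : μ A ≤ 1 := prob_le_one
      rcases eq_or_lt_of_le this with h | h
      · exact h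
      · exfalso
        have h2 := measure_univ (μ := μ)
        have h3 : (Set.univ : Set (ℕ → Bool)) = A ∪ Aᶜ := by simp
        rw [h3] at h2
        have := measure_union_le (μ := μ) A Aᶜ
        rw [h2, hcompl, add_zero] at this
        exact absurd this (not_le.mpr h)
    -- exact cylinder measures along a ∈ A
    have hcylA : ∀ a ∈ A, ∀ k : ℕ, μ (cyl (pre a (2*k))) = (2 : ENNReal)⁻¹ ^ k := by
      intro a ha k
      induction k with
      | zero => simp [pre_zero, cyl_nil]
      | succ k ih =>
        have hstep1 : μ (cyl (pre a (2*k+1))) = μ (cyl (pre a (2*k))) / 2 := by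
          rw [pre_succ]
          have heq := heven (pre a (2*k)) (by rw [pre_length]; exact even_two_mul k)
          cases h : a (2*k)
          · rw [← h] at heq ⊢; exact heq.1
          · rw [← h] at heq ⊢; exact heq.2
        have hstep2 : μ (cyl (pre a (2*(k+1)))) = μ (cyl (pre a (2*k+1))) := by
          have h21 : 2*(k+1) = (2*k+1) + 1 := by omega
          rw [h21, pre_succ]
          have hfalse : a (2*k+1) = false := ha (2*k+1) ⟨k, by omega⟩
          rw [hfalse]
          exact (hodd (pre a (2*k+1)) (by rw [pre_length]; exact ⟨k, by omega⟩)).1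
        rw [hstep2, hstep1, ih, pow_succ, ENNReal.div_eq_inv_mul, mul_comm]
    -- measure of E a (2k) for a ∈ A
    have hEA : ∀ a ∈ A, ∀ k : ℕ, μ (E a (2*k)) = (2 : ENNReal)⁻¹ ^ (k+1) := by
      intro a ha k
      have heq := heven (pre a (2*k)) (by rw [pre_length]; exact even_two_mul k)
      have h2 : μ (E a (2*k)) = μ (cyl (pre a (2*k))) / 2 := by
        rw [hE]
        cases h : a (2*k)
        · simp only [h, Bool.not_false]; exact heq.2
        · simp only [h, Bool.not_true]; exact heq.1
      rw [h2, hcylA a ha k, pow_succ, ENNReal.div_eq_inv_mul, mul_comm]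
    -- inner integral is infinite for a ∈ A
    have hinnerA : ∀ a ∈ A, ∫⁻ b, ups a b ^ (-(1/2 : ℝ)) ∂μ = ⊤ := by
      intro a ha
      have hK : ∀ K : ℕ, (K : ENNReal) * 2⁻¹ ≤ ∫⁻ b, ups a b ^ (-(1/2 : ℝ)) ∂μ := by
        intro K
        have hptlow : ∀ b : ℕ → Bool,
            (∑ k ∈ Finset.range K, (2 : ENNReal) ^ k * Set.indicator (E a (2*k)) 1 b)
              ≤ ups a b ^ (-(1/2 : ℝ)) := by
          intro b
          by_cases hb : ∃ k ∈ Finset.range K, b ∈ E a (2*k)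
          · obtain ⟨k₀, hk₀K, hk₀⟩ := hb
            obtain ⟨hb1, hb2⟩ := hmemE.mp hk₀
            have hsum : (∑ k ∈ Finset.range K,
                (2 : ENNReal) ^ k * Set.indicator (E a (2*k)) 1 b) = 2 ^ k₀ := by
              rw [Finset.sum_eq_single k₀]
              · rw [Set.indicator_of_mem hk₀]; simp
              · intro k hk hkne
                have hnot : b ∉ E a (2*k) := by
                  intro hbk
                  obtain ⟨hc1, hc2⟩ := hmemE.mp hbk
                  rcases lt_trichotomy k k₀ with h | h | h
                  · exact hc2 (hb1 (2*k) (by omega))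
                  · exact hkne h
                  · exact hb2 (hc1 (2*k₀) (by omega))
                rw [Set.indicator_of_notMem hnot, mul_zero]
              · intro h; exact absurd hk₀K h
            rw [hsum, ups_eq hb1 hb2, ups_rpow]
            apply le_of_eq
            rw [← ENNReal.rpow_natCast 2 k₀]
            congr 1
            push_cast
            ring
          · push_neg at hb
            have : (∑ k ∈ Finset.range K,
                (2 : ENNReal) ^ k * Set.indicator (E a (2*k)) 1 b) = 0 := by
              refine Finset.sum_eq_zero fun k hk => ?_
              rw [Set.indicator_of_notMem (hb k hk), mul_zero]
            rw [this]
            exact zero_le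
        calc (K : ENNReal) * 2⁻¹
            = ∑ k ∈ Finset.range K, (2 : ENNReal) ^ k * (2 : ENNReal)⁻¹ ^ (k+1) := by
              rw [Finset.sum_congr rfl (fun k _ => by
                rw [pow_succ, ← mul_assoc, ← mul_pow, ENNReal.mul_inv_cancel
                  (by norm_num) (by norm_num), one_pow, one_mul])]
              simp [Finset.sum_const]
          _ = ∑ k ∈ Finset.range K, (2 : ENNReal) ^ k * μ (E a (2*k)) := by
              exact Finset.sum_congr rfl fun k _ => by rw [hEA a ha k]
          _ = ∑ k ∈ Finset.range K, ∫⁻ b, (2 : ENNReal) ^ k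
                * Set.indicator (E a (2*k)) 1 b ∂μ := by
              refine Finset.sum_congr rfl fun k _ => ?_
              rw [lintegral_const_mul _ (measurable_one.indicator (hmeasE a (2*k))),
                lintegral_indicator_one (hmeasE a (2*k))]
          _ = ∫⁻ b, (∑ k ∈ Finset.range K, (2 : ENNReal) ^ k
                * Set.indicator (E a (2*k)) 1 b) ∂μ := by
              rw [lintegral_finset_sum]
              exact fun k _ => (measurable_one.indicator (hmeasE a (2*k))).const_mul _
          _ ≤ ∫⁻ b, ups a b ^ (-(1/2 : ℝ)) ∂μ := lintegral_mono hptlow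
      by_contra hne
      obtain ⟨K, hKgt⟩ := ENNReal.exists_nat_gt hne
      have := hK (2*K)
      have heq : ((2*K : ℕ) : ENNReal) * 2⁻¹ = (K : ENNReal) := by
        push_cast
        rw [mul_comm (2 : ENNReal) (K : ENNReal), mul_assoc,
          ENNReal.mul_inv_cancel (by norm_num) (by norm_num), mul_one]
      rw [heq] at this
      exact absurd this (not_le.mpr hKgt)
    have hlow : ∀ a : ℕ → Bool,
        A.indicator (fun _ => (⊤ : ENNReal)) a ≤ ∫⁻ b, ups a b ^ (-(1/2 : ℝ)) ∂μ := by
      intro a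
      by_cases ha : a ∈ A
      · rw [Set.indicator_of_mem ha, hinnerA a ha]
      · rw [Set.indicator_of_notMem ha]; exact zero_le
    have := lintegral_mono hlow (μ := μ)
    rw [lintegral_indicator_const hmeasA, hmuA, mul_one] at this
    exact top_le_iff.mp this
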